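/- Fix r ≥ 1 and d ≥ r. The map sending a monic linear differential operator L = ∂^r + a_{r−1}(x)∂^{r−1} + ... + a_0(x) with polynomial coefficients a_j of degree ≤ d to its fundamental matrix of truncated power series solutions at 0 — i.e., to the tuple (b_{j,i})_{0≤j<r, 0≤i≤d} where the unique power series solution f_j with f_j ≡ x^j mod x^r is written f_j = x^j + Σ_{i=0}^{d} b_{j,i} x^{r+i} — is a bijection (in fact an isomorphism of affine varieties) between the coefficient space C̄^{r(d+1)} of (a_{j,i}) and the space C̄^{r(d+1)} of (b_{j,i}). -/

import Mathlib

open PowerSeries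

/-- `stmt16Rel r d a b` says: for each `j < r`, there is a power series
solution `f_j` of the monic operator
`L = ∂^r + a_{r-1}(x)∂^{r-1} + ⋯ + a_0(x)` (with `a_j(x) = Σ_i a j i·x^i`)
satisfying `f_j ≡ x^j mod x^r`, whose coefficients of `x^{r+i}` for
`0 ≤ i ≤ d` are `b j i`. -/
def stmt16Rel (K : Type*) [Field K] (r d : ℕ)
    (a b : Fin r → Fin (d + 1) → K) : Prop :=
  ∀ j : Fin r, ∃ f : PowerSeries K,
    ((PowerSeries.derivativeFun)^[r] f
      + ∑ k : Fin r,
          (∑ i : Fin (d + 1), PowerSeries.C (a k i) * PowerSeries.X ^ (i : ℕ))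
            * (PowerSeries.derivativeFun)^[(k : ℕ)] f = 0)
    ∧ (∀ i < r, PowerSeries.coeff i f = if i = (j : ℕ) then 1 else 0)
    ∧ (∀ i : Fin (d + 1), PowerSeries.coeff (r + (i : ℕ)) f = b j i)

section Stmt16Aux

variable {K : Type*} [Field K]

theorem coeff_iter_deriv (f : K⟦X⟧) (k n : ℕ) :
    coeff n ((derivativeFun)^[k] f) = ((n + k).descFactorial k : K) * coeff (n + k) f := by
  induction k generalizing n with
  | zero => simp
  | succ k ih =>
    rw [Function.iterate_succ_apply', show ∀ g : K⟦X⟧, g.derivativeFun = derivative K g from fun _ => rfl, coeff_derivative, ih]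
    have h1 : (n + (k + 1)).descFactorial (k + 1) = (n + 1) * (n + 1 + k).descFactorial k := by
      rw [Nat.descFactorial_succ, show n + (k + 1) - k = n + 1 from by omega,
        show n + (k + 1) = n + 1 + k from by omega]
    have h2 : n + 1 + k = n + (k + 1) := by omega
    rw [h2, h1]
    push_cast
    ring

noncomputable def Ssum (r d : ℕ) (a : Fin r → Fin (d + 1) → K) (c : ℕ → K) (n : ℕ) : K :=
  ∑ k : Fin r, ∑ i : Fin (d + 1),
    if (i : ℕ) ≤ n then a k i * ((n - i + k).descFactorial k : K) * c (n - i + k) else 0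

noncomputable def solC (r d : ℕ) (a : Fin r → Fin (d + 1) → K) (init : Fin r → K) : ℕ → K
  | n =>
    if h : n < r then init ⟨n, h⟩
    else
      -((n.descFactorial r : K))⁻¹ *
        ∑ k : Fin r, ∑ i : Fin (d + 1),
          if (i : ℕ) ≤ n - r then
            a k i * ((n - r - i + k).descFactorial k : K) * solC r d a init (n - r - i + k)
          else 0
  termination_by n => n
  decreasing_by
    simp_wf
    have hk := k.isLt
    omega

theorem solC_lt (r d : ℕ) (a : Fin r → Fin (d + 1) → K) (init : Fin r → K) (m : ℕ) (h : m < r) :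
    solC r d a init m = init ⟨m, h⟩ := by
  rw [solC, dif_pos h]

theorem solC_ge (r d : ℕ) (a : Fin r → Fin (d + 1) → K) (init : Fin r → K) (m : ℕ) (h : r ≤ m) :
    solC r d a init m = -((m.descFactorial r : K))⁻¹ * Ssum r d a (solC r d a init) (m - r) := by
  rw [solC, dif_neg (by omega)]
  rfl

theorem coeff_term (c : K) (i k n : ℕ) (f : K⟦X⟧) :
    coeff n (PowerSeries.C c * X ^ i * (derivativeFun)^[k] f)
      = if i ≤ n then c * ((n - i + k).descFactorial k : K) * coeff (n - i + k) f else 0 := by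
  rw [mul_assoc, coeff_C_mul, coeff_X_pow_mul']
  split_ifs with h
  · rw [coeff_iter_deriv]; ring
  · simp

theorem coeff_Lop (r d n : ℕ) (a : Fin r → Fin (d + 1) → K) (f : K⟦X⟧) :
    coeff n ((derivativeFun)^[r] f
      + ∑ k : Fin r,
          (∑ i : Fin (d + 1), PowerSeries.C (a k i) * X ^ (i : ℕ))
            * (derivativeFun)^[(k : ℕ)] f)
    = ((n + r).descFactorial r : K) * coeff (n + r) f
      + Ssum r d a (fun m => coeff m f) n := by
  rw [map_add, map_sum, coeff_iter_deriv]
  congr 1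
  unfold Ssum
  refine Finset.sum_congr rfl fun k _ => ?_
  rw [Finset.sum_mul, map_sum]
  exact Finset.sum_congr rfl fun i _ => coeff_term _ _ _ _ _

theorem Lop_zero_iff (r d : ℕ) (a : Fin r → Fin (d + 1) → K) (f : K⟦X⟧) :
    ((derivativeFun)^[r] f
      + ∑ k : Fin r,
          (∑ i : Fin (d + 1), PowerSeries.C (a k i) * X ^ (i : ℕ))
            * (derivativeFun)^[(k : ℕ)] f) = 0
    ↔ ∀ n : ℕ, ((n + r).descFactorial r : K) * coeff (n + r) f
        + Ssum r d a (fun m => coeff m f) n = 0 := by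
  constructor
  · intro h n
    rw [← coeff_Lop, h, map_zero]
  · intro h
    ext n
    rw [coeff_Lop, map_zero]
    exact h n

theorem descF_ne_zero [CharZero K] {m k : ℕ} (h : k ≤ m) : ((m.descFactorial k : K)) ≠ 0 := by
  have : m.descFactorial k ≠ 0 := fun h0 => by
    rw [Nat.descFactorial_eq_zero_iff_lt] at h0; omega
  exact_mod_cast Nat.cast_ne_zero.mpr this

theorem Ssum_congr {r d : ℕ} {a : Fin r → Fin (d + 1) → K} {c₁ c₂ : ℕ → K} (n : ℕ)
    (h : ∀ m, m < n + r → c₁ m = c₂ m) : Ssum r d a c₁ n = Ssum r d a c₂ n := by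
  unfold Ssum
  refine Finset.sum_congr rfl fun k _ => Finset.sum_congr rfl fun i _ => ?_
  split_ifs with hi
  · rw [h _ (by have := k.isLt; omega)]
  · rfl

theorem solC_spec [CharZero K] (r d : ℕ) (a : Fin r → Fin (d + 1) → K) (init : Fin r → K)
    (n : ℕ) :
    ((n + r).descFactorial r : K) * solC r d a init (n + r)
      + Ssum r d a (solC r d a init) n = 0 := by
  rw [solC_ge r d a init (n + r) (by omega), show n + r - r = n from by omega]
  have hne : (((n + r).descFactorial r : K)) ≠ 0 := descF_ne_zero (by omega)
  field_simp
  ring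

theorem sol_unique [CharZero K] (r d : ℕ) (a : Fin r → Fin (d + 1) → K) (init : Fin r → K)
    (g : ℕ → K)
    (hg1 : ∀ n : ℕ, ((n + r).descFactorial r : K) * g (n + r) + Ssum r d a g n = 0)
    (hg2 : ∀ m (h : m < r), g m = init ⟨m, h⟩) :
    ∀ n, g n = solC r d a init n := by
  intro n
  induction n using Nat.strong_induction_on with
  | _ n ih =>
    by_cases h : n < r
    · rw [solC_lt r d a init n h]; exact hg2 n h
    · have hn : n - r + r = n := by omega
      have e1 := hg1 (n - r)
      have e2 := solC_spec r d a init (n - r)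
      rw [hn] at e1 e2
      have hS : Ssum r d a g (n - r) = Ssum r d a (solC r d a init) (n - r) :=
        Ssum_congr _ (fun m hm => ih m (by omega))
      have hne : ((n.descFactorial r : K)) ≠ 0 := descF_ne_zero (by omega)
      have : (n.descFactorial r : K) * g n = (n.descFactorial r : K) * solC r d a init n := by
        linear_combination e1 - e2 - hS
      exact mul_left_cancel₀ hne this

theorem coeff_eq_solC [CharZero K] {r d : ℕ} {a : Fin r → Fin (d + 1) → K} {f : K⟦X⟧}
    {j : Fin r}
    (h0 : (derivativeFun)^[r] f
      + ∑ k : Fin r,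
          (∑ i : Fin (d + 1), PowerSeries.C (a k i) * X ^ (i : ℕ))
            * (derivativeFun)^[(k : ℕ)] f = 0)
    (h1 : ∀ i < r, coeff i f = if i = (j : ℕ) then 1 else 0) :
    ∀ n, coeff n f = solC r d a (fun i => if (i : ℕ) = (j : ℕ) then 1 else 0) n :=
  sol_unique r d a _ _ ((Lop_zero_iff r d a f).mp h0) (fun m h => h1 m h)

theorem part1 [CharZero K] (r d : ℕ) (a : Fin r → Fin (d + 1) → K) :
    ∃! b, stmt16Rel K r d a b := by
  refine ⟨fun j i => solC r d a (fun i' => if (i' : ℕ) = (j : ℕ) then 1 else 0) (r + i), ?_, ?_⟩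
  · intro j
    refine ⟨PowerSeries.mk (solC r d a (fun i' => if (i' : ℕ) = (j : ℕ) then 1 else 0)),
      ?_, ?_, ?_⟩
    · rw [Lop_zero_iff]
      intro n
      have hfun : (fun m => coeff m
            (PowerSeries.mk (solC r d a (fun i' => if (i' : ℕ) = (j : ℕ) then 1 else 0))))
          = solC r d a (fun i' => if (i' : ℕ) = (j : ℕ) then 1 else 0) :=
        funext fun m => coeff_mk m _
      rw [hfun, coeff_mk]
      exact solC_spec r d a _ n
    · intro i hi
      rw [coeff_mk, solC_lt r d a _ i hi]
    · intro i
      rw [coeff_mk]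
  · intro b' hb'
    funext j i
    obtain ⟨f, h0, h1, h2⟩ := hb' j
    rw [← h2 i, coeff_eq_solC h0 h1]

noncomputable def cseq (r d : ℕ) (b : Fin r → Fin (d + 1) → K) (j : Fin r) (m : ℕ) : K :=
  if m < r then (if m = (j : ℕ) then 1 else 0)
  else if h2 : m - r < d + 1 then b j ⟨m - r, h2⟩ else 0

noncomputable def Acoef (r d : ℕ) (b : Fin r → Fin (d + 1) → K) : ℕ → Fin r → K
  | n => fun j =>
    if hn : n < d + 1 then
      -(((j : ℕ).factorial : K))⁻¹ *
        (((n + r).descFactorial r : K) * b j ⟨n, hn⟩ +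
          ∑ k : Fin r, ∑ i : Fin (d + 1),
            if h : (i : ℕ) < n then
              Acoef r d b i k * ((n - i + k).descFactorial k : K) * cseq r d b j (n - i + k)
            else 0)
    else 0
  termination_by n => n
  decreasing_by exact h

theorem Ssum_split [CharZero K] {r d : ℕ} (a : Fin r → Fin (d + 1) → K) {n : ℕ}
    (hn : n < d + 1) (j : Fin r) (c : ℕ → K)
    (hc : ∀ k : Fin r, c (k : ℕ) = if (k : ℕ) = (j : ℕ) then 1 else 0) :
    Ssum r d a c n
      = (∑ k : Fin r, ∑ i : Fin (d + 1),
          if (i : ℕ) < n then a k i * ((n - i + k).descFactorial k : K) * c (n - i + k) else 0)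
        + a j ⟨n, hn⟩ * ((j : ℕ).factorial : K) := by
  unfold Ssum
  have key : ∀ k : Fin r, ∀ i : Fin (d + 1),
      (if (i : ℕ) ≤ n then a k i * ((n - i + k).descFactorial k : K) * c (n - i + k) else 0)
        = (if (i : ℕ) < n then a k i * ((n - i + k).descFactorial k : K) * c (n - i + k) else 0)
          + (if i = (⟨n, hn⟩ : Fin (d + 1)) then
              a k i * ((n - i + k).descFactorial k : K) * c (n - i + k) else 0) := by
    intro k i
    rcases eq_or_ne i (⟨n, hn⟩ : Fin (d + 1)) with h | h
    · subst h
      simp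
    · rw [if_neg h, add_zero]
      have h' : (i : ℕ) ≠ n := fun hv => h (Fin.ext hv)
      exact if_congr (by omega) rfl rfl
  simp only [key, Finset.sum_add_distrib]
  congr 1
  have : ∀ k : Fin r,
      (∑ i : Fin (d + 1), if i = (⟨n, hn⟩ : Fin (d + 1)) then
          a k i * ((n - i + k).descFactorial k : K) * c (n - i + k) else 0)
        = a k ⟨n, hn⟩ * ((k : ℕ).factorial : K) * c (k : ℕ) := by
    intro k
    rw [Finset.sum_ite_eq' Finset.univ (⟨n, hn⟩ : Fin (d + 1))]
    simp only [Finset.mem_univ, if_true]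
    have e : n - (⟨n, hn⟩ : Fin (d + 1)) + (k : ℕ) = (k : ℕ) := by simp
    rw [e, Nat.descFactorial_self]
  simp only [this, hc]
  rw [Finset.sum_congr rfl (fun k _ => by rw [mul_ite, mul_one, mul_zero])]
  rw [Finset.sum_eq_single j (fun k _ hk => if_neg (fun h => hk (Fin.ext h))) (by simp)]
  rw [if_pos rfl]

theorem Acoef_spec [CharZero K] (r d : ℕ) (b : Fin r → Fin (d + 1) → K) {n : ℕ}
    (hn : n < d + 1) (j : Fin r) :
    ((n + r).descFactorial r : K) * b j ⟨n, hn⟩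
      + Ssum r d (fun k i => Acoef r d b i k) (cseq r d b j) n = 0 := by
  have hc : ∀ k : Fin r, cseq r d b j (k : ℕ) = if (k : ℕ) = (j : ℕ) then 1 else 0 := by
    intro k; rw [cseq, if_pos k.isLt]
  rw [Ssum_split _ hn j _ hc]
  have hA : Acoef r d b n j = -(((j : ℕ).factorial : K))⁻¹ *
      (((n + r).descFactorial r : K) * b j ⟨n, hn⟩ +
        ∑ k : Fin r, ∑ i : Fin (d + 1),
          if (i : ℕ) < n then
            Acoef r d b i k * ((n - i + k).descFactorial k : K) * cseq r d b j (n - i + k)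
          else 0) := by
    rw [Acoef]
    simp only [dif_pos hn, dite_eq_ite]
  have hj : (((j : ℕ).factorial : K)) ≠ 0 := Nat.cast_ne_zero.mpr (Nat.factorial_ne_zero _)
  show ((n + r).descFactorial r : K) * b j ⟨n, hn⟩
      + ((∑ k : Fin r, ∑ i : Fin (d + 1),
          if (i : ℕ) < n then
            Acoef r d b i k * ((n - i + k).descFactorial k : K) * cseq r d b j (n - i + k)
          else 0)
        + Acoef r d b n j * ((j : ℕ).factorial : K)) = 0
  rw [hA]
  field_simp
  ring

theorem solC_eq_cseq [CharZero K] (r d : ℕ) (hr : 1 ≤ r) (hd : r ≤ d)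
    (b : Fin r → Fin (d + 1) → K) (j : Fin r) :
    ∀ m, m ≤ r + d →
      solC r d (fun k i => Acoef r d b i k)
          (fun i' => if (i' : ℕ) = (j : ℕ) then 1 else 0) m
        = cseq r d b j m := by
  intro m
  induction m using Nat.strong_induction_on with
  | _ m ih =>
    intro hm
    by_cases h : m < r
    · rw [solC_lt _ _ _ _ m h, cseq, if_pos h]
    · have hmr : m - r < d + 1 := by omega
      rw [solC_ge _ _ _ _ m (by omega)]
      have hS : Ssum r d (fun k i => Acoef r d b i k)
            (solC r d (fun k i => Acoef r d b i k)
              (fun i' => if (i' : ℕ) = (j : ℕ) then 1 else 0)) (m - r)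
          = Ssum r d (fun k i => Acoef r d b i k) (cseq r d b j) (m - r) :=
        Ssum_congr _ (fun m' hm' => ih m' (by omega) (by omega))
      rw [hS]
      have h2 := Acoef_spec r d b hmr j
      rw [show m - r + r = m from by omega] at h2
      rw [cseq, if_neg h, dif_pos hmr]
      have hne : ((m.descFactorial r : K)) ≠ 0 := descF_ne_zero (by omega)
      field_simp
      linear_combination -h2

theorem part2 [CharZero K] (r d : ℕ) (hr : 1 ≤ r) (hd : r ≤ d)
    (b : Fin r → Fin (d + 1) → K) :
    ∃! a, stmt16Rel K r d a b := by
  refine ⟨fun k i => Acoef r d b i k, ?_, ?_⟩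
  · intro j
    refine ⟨PowerSeries.mk (solC r d (fun k i => Acoef r d b i k)
      (fun i' => if (i' : ℕ) = (j : ℕ) then 1 else 0)), ?_, ?_, ?_⟩
    · rw [Lop_zero_iff]
      intro n
      have hfun : (fun m => coeff m (PowerSeries.mk (solC r d (fun k i => Acoef r d b i k)
            (fun i' => if (i' : ℕ) = (j : ℕ) then 1 else 0))))
          = solC r d (fun k i => Acoef r d b i k)
            (fun i' => if (i' : ℕ) = (j : ℕ) then 1 else 0) :=
        funext fun m => coeff_mk m _
      rw [hfun, coeff_mk]
      exact solC_spec r d _ _ n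
    · intro i hi
      rw [coeff_mk, solC_lt r d _ _ i hi]
    · intro i
      rw [coeff_mk, solC_eq_cseq r d hr hd b j _ (by omega)]
      rw [cseq, if_neg (by omega), dif_pos (by omega)]
      congr 1
      exact Fin.ext (show r + (i : ℕ) - r = (i : ℕ) by omega)
  · intro a' h
    have key : ∀ n, ∀ (hn : n < d + 1), ∀ k : Fin r, a' k ⟨n, hn⟩ = Acoef r d b n k := by
      intro n
      induction n using Nat.strong_induction_on with
      | _ n ih =>
        intro hn k
        obtain ⟨f, h0, h1, h2⟩ := h k
        have heq := (Lop_zero_iff r d a' f).mp h0 n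
        have hcoeff : ∀ m, m < n + r → coeff m f = cseq r d b k m := by
          intro m hm
          by_cases hmr : m < r
          · rw [h1 m hmr, cseq, if_pos hmr]
          · have hm2 : m - r < d + 1 := by omega
            have h3 := h2 ⟨m - r, hm2⟩
            rw [show r + ((⟨m - r, hm2⟩ : Fin (d + 1)) : ℕ) = m from by simp; omega] at h3
            rw [h3, cseq, if_neg hmr, dif_pos hm2]
        have hc2 : coeff (n + r) f = b k ⟨n, hn⟩ := by
          have h3 := h2 ⟨n, hn⟩
          rw [show r + ((⟨n, hn⟩ : Fin (d + 1)) : ℕ) = n + r from by simp [Nat.add_comm]] at h3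
          exact h3
        rw [Ssum_congr n hcoeff, hc2] at heq
        rw [Ssum_split a' hn k _ (fun k' => by rw [cseq, if_pos k'.isLt])] at heq
        have hSS : (∑ k' : Fin r, ∑ i : Fin (d + 1),
              if (i : ℕ) < n then a' k' i * ((n - i + k').descFactorial k' : K)
                * cseq r d b k (n - i + k') else 0)
            = ∑ k' : Fin r, ∑ i : Fin (d + 1),
              if hh : (i : ℕ) < n then Acoef r d b i k' * ((n - i + k').descFactorial k' : K)
                * cseq r d b k (n - i + k') else 0 := by
          refine Finset.sum_congr rfl fun k' _ => Finset.sum_congr rfl fun i _ => ?_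
          rw [dite_eq_ite]
          split_ifs with hi
          · have h4 := ih i hi i.isLt k'
            rw [show (⟨(i : ℕ), i.isLt⟩ : Fin (d + 1)) = i from rfl] at h4
            rw [h4]
          · rfl
        rw [hSS] at heq
        have hA : Acoef r d b n k = -(((k : ℕ).factorial : K))⁻¹ *
            (((n + r).descFactorial r : K) * b k ⟨n, hn⟩ +
              ∑ k' : Fin r, ∑ i : Fin (d + 1),
                if hh : (i : ℕ) < n then Acoef r d b i k' * ((n - i + k').descFactorial k' : K)
                  * cseq r d b k (n - i + k') else 0) := by
          rw [Acoef]
          simp only [dif_pos hn]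
        have hk : (((k : ℕ).factorial : K)) ≠ 0 := Nat.cast_ne_zero.mpr (Nat.factorial_ne_zero _)
        have hfin : a' k ⟨n, hn⟩ * ((k : ℕ).factorial : K)
            = Acoef r d b n k * ((k : ℕ).factorial : K) := by
          rw [hA]
          simp only [dite_eq_ite] at heq ⊢
          field_simp
          linear_combination heq
        exact mul_right_cancel₀ hk hfin
    funext k i
    exact key (i : ℕ) i.isLt k

end Stmt16Aux

/-- The map sending the coefficient tuple `(a_{j,i})` of a monic operator
`L = ∂^r + a_{r-1}∂^{r-1} + ⋯ + a_0` (with polynomial coefficients of degree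
`≤ d`) to its fundamental matrix `(b_{j,i})` of truncated power series
solutions at `0` is a bijection `K̄^{r(d+1)} → K̄^{r(d+1)}`: every `a`
determines a unique `b` and every `b` comes from a unique `a`. -/
theorem stmt16 {K : Type*} [Field K] [CharZero K] [IsAlgClosed K]
    (r d : ℕ) (hr : 1 ≤ r) (hd : r ≤ d) :
    (∀ a : Fin r → Fin (d + 1) → K, ∃! b, stmt16Rel K r d a b)
    ∧ (∀ b : Fin r → Fin (d + 1) → K, ∃! a, stmt16Rel K r d a b) := by
  exact ⟨fun a => part1 r d a, fun b => part2 r d hr hd b⟩
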